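/- arXiv:2006.13021 — 2 statements merged into one kernel-verified Lean document; each statement's English description precedes it below -/
import Mathlib

section
/- Let 1 ≤ r < s ≤ ∞. Let (f_k) be a sequence in L¹(𝕋, ℂ) with ‖f_k‖_{L¹} + ‖f̂_k‖_{ℓ^r(ℤ)} ≤ 1 for all k, and let f ∈ L¹(𝕋, ℂ) with f̂ ∈ ℓ^s(ℤ) be such that ‖f_k − f‖_{L¹} + ‖f̂_k − f̂‖_{ℓ^s(ℤ)} → 0 as k → ∞. Then f̂ ∈ ℓ^r(ℤ) and ‖f‖_{L¹} + ‖f̂‖_{ℓ^r(ℤ)} ≤ 1. -/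
open MeasureTheory Filter Topology AddCircle
open scoped ENNReal

/-- The `n`-th Fourier coefficient `f̂(n) = ∫ f(t)·exp(-2πint) dt` of a
function on the circle `𝕋 = ℝ/ℤ` with normalized Haar measure. -/
noncomputable def fourierCoeff' (f : AddCircle (1 : ℝ) → ℂ) (n : ℤ) : ℂ :=
  ∫ t, f t * (fourier (-n)) t ∂(haarAddCircle : Measure (AddCircle (1 : ℝ)))

set_option maxHeartbeats 1000000 in
/-- (`1 ≤ r < s ≤ ∞`) if `(f_k)` lies in the closed unit ball of
`A_2^r(ℤ)`, i.e. `‖f_k‖_{L¹(𝕋)} + ‖f̂_k‖_{ℓ^r(ℤ)} ≤ 1`, and `f ∈ L¹(𝕋)` with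
`f̂ ∈ ℓ^s(ℤ)` satisfies `‖f_k - f‖_{L¹} + ‖f̂_k - f̂‖_{ℓ^s} → 0`, then
`f̂ ∈ ℓ^r(ℤ)` and `‖f‖_{L¹} + ‖f̂‖_{ℓ^r} ≤ 1` (the identity
`A_2^r(ℤ) → A_2^s(ℤ)` is a semi-embedding). Here the `ℓ^t(ℤ)` norm is realized
as the `L^t` norm for the counting measure on `ℤ`. -/
theorem A2r_unit_ball_closed_in_A2s
    (r s : ℝ≥0∞) (hr : 1 ≤ r) (hrs : r < s)
    (f : ℕ → AddCircle (1 : ℝ) → ℂ)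
    (hf : ∀ k, Integrable (f k) (haarAddCircle : Measure (AddCircle (1 : ℝ))))
    (hball : ∀ k,
      eLpNorm (f k) 1 (haarAddCircle : Measure (AddCircle (1 : ℝ))) +
        eLpNorm (fun n : ℤ => fourierCoeff' (f k) n) r Measure.count ≤ 1)
    (g : AddCircle (1 : ℝ) → ℂ)
    (hg : Integrable g (haarAddCircle : Measure (AddCircle (1 : ℝ))))
    (hgs : eLpNorm (fun n : ℤ => fourierCoeff' g n) s Measure.count < ⊤)
    (hconv : Tendsto (fun k =>
        eLpNorm (f k - g) 1 (haarAddCircle : Measure (AddCircle (1 : ℝ))) +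
          eLpNorm (fun n : ℤ => fourierCoeff' (f k) n - fourierCoeff' g n) s
            Measure.count)
      atTop (𝓝 0)) :
    eLpNorm (fun n : ℤ => fourierCoeff' g n) r Measure.count < ⊤ ∧
    eLpNorm g 1 (haarAddCircle : Measure (AddCircle (1 : ℝ))) +
      eLpNorm (fun n : ℤ => fourierCoeff' g n) r Measure.count ≤ 1 := by
  set μ := (haarAddCircle : Measure (AddCircle (1 : ℝ))) with hμ
  set a : ℕ → ℝ≥0∞ := fun k => eLpNorm (f k - g) 1 μ with ha
  -- `a k → 0` by squeezing
  have ha0 : Tendsto a atTop (𝓝 0) :=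
    tendsto_of_tendsto_of_tendsto_of_le_of_le tendsto_const_nhds hconv
      (fun k => zero_le) (fun k => le_self_add)
  -- integrability of products with characters
  have hint : ∀ (h : AddCircle (1 : ℝ) → ℂ), Integrable h μ → ∀ n : ℤ,
      Integrable (fun t => h t * (fourier (-n)) t) μ := by
    intro h hh n
    have := hh.bdd_mul (map_continuous (fourier (-n))).aestronglyMeasurable
      (Eventually.of_forall fun x => (Circle.norm_coe _).le)
    exact this.congr (Eventually.of_forall fun t => mul_comm _ _)
  -- pointwise convergence of Fourier coefficients
  have hptw : ∀ n : ℤ,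
      Tendsto (fun k => fourierCoeff' (f k) n) atTop (𝓝 (fourierCoeff' g n)) := by
    intro n
    rw [tendsto_iff_norm_sub_tendsto_zero]
    have hb : ∀ k, ‖fourierCoeff' (f k) n - fourierCoeff' g n‖ ≤ (a k).toReal := by
      intro k
      have h1 := hint _ (hf k) n
      have h2 := hint _ hg n
      have hdiff : fourierCoeff' (f k) n - fourierCoeff' g n
          = ∫ t, (f k t - g t) * (fourier (-n)) t ∂μ := by
        rw [fourierCoeff', fourierCoeff', ← integral_sub h1 h2]
        congr 1; funext t; ring
      rw [hdiff]
      calc ‖∫ t, (f k t - g t) * (fourier (-n)) t ∂μ‖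
          ≤ ∫ t, ‖(f k t - g t) * (fourier (-n)) t‖ ∂μ := norm_integral_le_integral_norm _
        _ = ∫ t, ‖(f k - g) t‖ ∂μ := by
            congr 1; funext t
            simp [norm_mul, Circle.norm_coe]
        _ = (a k).toReal := by
            show ∫ t, ‖(f k - g) t‖ ∂μ = (eLpNorm (f k - g) 1 μ).toReal
            rw [eLpNorm_one_eq_lintegral_enorm]
            exact integral_norm_eq_lintegral_enorm ((hf k).sub hg).1
    have htr : Tendsto (fun k => (a k).toReal) atTop (𝓝 0) := by
      have := (ENNReal.tendsto_toReal (by simp : (0 : ℝ≥0∞) ≠ ⊤)).comp ha0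
      simpa [Function.comp_def] using this
    exact squeeze_zero (fun k => norm_nonneg _) hb htr
  -- measurability on ℤ with counting measure
  have hmeas : ∀ k, AEStronglyMeasurable
      (fun n : ℤ => fourierCoeff' (f k) n) (Measure.count : Measure ℤ) :=
    fun k => (measurable_of_countable _).aestronglyMeasurable
  -- Fatou for the ℓ^r norm
  have hfatou : eLpNorm (fun n : ℤ => fourierCoeff' g n) r Measure.count ≤
      atTop.liminf fun k => eLpNorm (fun n : ℤ => fourierCoeff' (f k) n) r Measure.count :=
    Lp.eLpNorm_lim_le_liminf_eLpNorm hmeas _ (Eventually.of_forall fun n => hptw n)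
  -- `‖g‖₁ ≤ a k + ‖f k‖₁`
  have hg_le : ∀ k, eLpNorm g 1 μ ≤ a k + eLpNorm (f k) 1 μ := by
    intro k
    calc eLpNorm g 1 μ = eLpNorm ((g - f k) + f k) 1 μ := by
          congr 1; funext t; simp
      _ ≤ eLpNorm (g - f k) 1 μ + eLpNorm (f k) 1 μ :=
          eLpNorm_add_le (hg.sub (hf k)).1 (hf k).1 le_rfl
      _ = a k + eLpNorm (f k) 1 μ := by rw [ha]; rw [eLpNorm_sub_comm]
  have hg_liminf : eLpNorm g 1 μ ≤ atTop.liminf fun k => a k + eLpNorm (f k) 1 μ :=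
    le_liminf_of_le (by isBoundedDefault) (Eventually.of_forall hg_le)
  set c : ℕ → ℝ≥0∞ :=
    fun k => eLpNorm (fun n : ℤ => fourierCoeff' (f k) n) r Measure.count with hc
  have hlim1 : (atTop.liminf fun k => (a k + eLpNorm (f k) 1 μ) +
      eLpNorm (fun n : ℤ => fourierCoeff' (f k) n) r Measure.count) ≤ 1 := by
    have hle : ∀ k, (a k + eLpNorm (f k) 1 μ) +
        eLpNorm (fun n : ℤ => fourierCoeff' (f k) n) r Measure.count ≤ a k + 1 := by
      intro k
      rw [add_assoc]
      exact add_le_add_right (hball k) _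
    have hlim : Tendsto (fun k => a k + 1) atTop (𝓝 (0 + 1 : ℝ≥0∞)) :=
      ha0.add tendsto_const_nhds
    calc (atTop.liminf fun k => (a k + eLpNorm (f k) 1 μ) +
          eLpNorm (fun n : ℤ => fourierCoeff' (f k) n) r Measure.count)
        ≤ atTop.liminf fun k => a k + 1 :=
          liminf_le_liminf (Eventually.of_forall hle)
      _ = (0 + 1 : ℝ≥0∞) := hlim.liminf_eq
      _ = 1 := by simp
  have hmain : eLpNorm g 1 μ +
      eLpNorm (fun n : ℤ => fourierCoeff' g n) r Measure.count ≤ 1 := by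
    calc eLpNorm g 1 μ + eLpNorm (fun n : ℤ => fourierCoeff' g n) r Measure.count
        ≤ eLpNorm g 1 μ + atTop.liminf c := add_le_add_right hfatou _
      _ = atTop.liminf fun k => eLpNorm g 1 μ + c k :=
          (liminf_const_add atTop c (eLpNorm g 1 μ) (by isBoundedDefault)
            (by isBoundedDefault)).symm
      _ ≤ atTop.liminf fun k => (a k + eLpNorm (f k) 1 μ) + c k :=
          liminf_le_liminf (Eventually.of_forall fun k =>
            add_le_add_left (hg_le k) _)
      _ ≤ 1 := hlim1
  refine ⟨?_, hmain⟩
  exact lt_of_le_of_lt (le_trans le_add_self hmain) (by simp)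
end

section
/- Let (α, μ) be a measure space, let 1 ≤ q < ∞ and 1 ≤ r < s ≤ ∞. Let (v_k) be a sequence of measurable functions with ‖v_k‖_{L^q} + ‖v_k‖_{L^r} ≤ 1 for all k, and let w be a measurable function with ‖w‖_{L^s} < ∞ such that ‖v_k − w‖_{L^q} + ‖v_k − w‖_{L^s} → 0 as k → ∞. Then w ∈ L^r(μ) and ‖w‖_{L^q} + ‖w‖_{L^r} ≤ 1. In other words, the identity map from L^q ∩ L^r (with the sum norm) to L^q ∩ L^s (with the sum norm) maps the closed unit ball onto a closed set, i.e. it is a semi-embedding. -/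
open MeasureTheory Filter Topology
open scoped ENNReal

private lemma liminf_add_liminf_le_aux (u v : ℕ → ℝ≥0∞) :
    Filter.atTop.liminf u + Filter.atTop.liminf v ≤
      Filter.atTop.liminf fun k => u k + v k := by
  rw [Filter.liminf_eq_iSup_iInf_of_nat, Filter.liminf_eq_iSup_iInf_of_nat,
    Filter.liminf_eq_iSup_iInf_of_nat]
  have hmono : ∀ w : ℕ → ℝ≥0∞, Monotone fun n : ℕ => ⨅ i ≥ n, w i := by
    intro w n m hnm
    exact le_iInf₂ fun i hi => iInf₂_le i (hnm.trans hi)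
  rw [ENNReal.iSup_add_iSup_of_monotone (hmono u) (hmono v)]
  exact iSup_mono fun n =>
    le_iInf₂ fun i hi => add_le_add (iInf₂_le i hi) (iInf₂_le i hi)

/-- let `(α, μ)` be a measure space, `1 ≤ q < ∞` and
`1 ≤ r < s ≤ ∞`. If `(v_k)` is a sequence of measurable functions with
`‖v_k‖_{L^q} + ‖v_k‖_{L^r} ≤ 1`, and `w` is measurable with `‖w‖_{L^s} < ∞`
and `‖v_k - w‖_{L^q} + ‖v_k - w‖_{L^s} → 0`, then `w ∈ L^r` and
`‖w‖_{L^q} + ‖w‖_{L^r} ≤ 1`; i.e. the identity from `L^q ∩ L^r` to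
`L^q ∩ L^s` (with the sum norms) maps the closed unit ball onto a closed set:
it is a semi-embedding. -/
theorem Lq_inter_Lr_unit_ball_closed_in_Lq_inter_Ls
    {α : Type*} [MeasurableSpace α] (μ : Measure α)
    (q r s : ℝ≥0∞) (hq : 1 ≤ q) (hq_top : q < ⊤) (hr : 1 ≤ r) (hrs : r < s)
    (v : ℕ → α → ℝ) (hv : ∀ k, AEStronglyMeasurable (v k) μ)
    (hball : ∀ k, eLpNorm (v k) q μ + eLpNorm (v k) r μ ≤ 1)
    (w : α → ℝ) (hw : AEStronglyMeasurable w μ) (hws : eLpNorm w s μ < ⊤)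
    (hconv : Tendsto (fun k => eLpNorm (v k - w) q μ + eLpNorm (v k - w) s μ)
      atTop (𝓝 0)) :
    eLpNorm w r μ < ⊤ ∧ eLpNorm w q μ + eLpNorm w r μ ≤ 1 := by
  have hq0 : q ≠ 0 := (lt_of_lt_of_le zero_lt_one hq).ne'
  have hconvq : Tendsto (fun k => eLpNorm (v k - w) q μ) atTop (𝓝 0) :=
    tendsto_of_tendsto_of_tendsto_of_le_of_le tendsto_const_nhds hconv
      (fun k => zero_le) (fun k => le_self_add)
  have him : TendstoInMeasure μ v atTop w :=
    tendstoInMeasure_of_tendsto_eLpNorm hq0 hv hw hconvq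
  obtain ⟨ns, -, hae⟩ := him.exists_seq_tendsto_ae
  have hwq : eLpNorm w q μ ≤ atTop.liminf fun k => eLpNorm (v (ns k)) q μ :=
    Lp.eLpNorm_lim_le_liminf_eLpNorm (fun k => hv (ns k)) w hae
  have hwr : eLpNorm w r μ ≤ atTop.liminf fun k => eLpNorm (v (ns k)) r μ :=
    Lp.eLpNorm_lim_le_liminf_eLpNorm (fun k => hv (ns k)) w hae
  have hsum : eLpNorm w q μ + eLpNorm w r μ ≤ 1 := by
    calc eLpNorm w q μ + eLpNorm w r μ
        ≤ (atTop.liminf fun k => eLpNorm (v (ns k)) q μ) +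
            atTop.liminf fun k => eLpNorm (v (ns k)) r μ := add_le_add hwq hwr
      _ ≤ atTop.liminf (fun k => eLpNorm (v (ns k)) q μ +
            eLpNorm (v (ns k)) r μ) := liminf_add_liminf_le_aux _ _
      _ ≤ atTop.liminf fun _ : ℕ => (1 : ℝ≥0∞) :=
          liminf_le_liminf (Eventually.of_forall fun k => hball (ns k))
      _ = 1 := liminf_const 1
  exact ⟨lt_of_le_of_lt (le_trans le_add_self hsum) ENNReal.one_lt_top, hsum⟩
end
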